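/- Let $(X,d,\mu,\mathcal{E}_p,\mathcal{F}_p,\Gamma_p)$ be a regular local $p$-Dirichlet space, $\Omega \subseteq X$ open, $u \in \mathcal{H}_+(\Omega)$ a quasicontinuous superharmonic function with $\Gamma_p\langle u\rangle(\Omega) < \infty$ and $0 \le u \le 1$, and let $h \in \mathcal{F}_p$ be quasicontinuous with $h \le 0$ on $X \setminus \Omega$. If $A \subseteq \Omega$ is a Borel set with $h \ge 1$ on $A$, then $\Gamma_p\langle u\rangle(A) \le \Gamma_p\langle h\rangle(\Omega)$. -/

import Mathlib

open MeasureTheory Metric Set ENNReal Filter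

noncomputable section

/-- A regular local `p`-Dirichlet structure on a metric measure space (Definition 2.1 of the
paper).  Members of `F` are (representatives of) functions in the domain of the energy; `Γ f`
is the energy measure of `f`, and the total energy is `E_p(f) = Γ f univ`. -/
structure PDirichlet (X : Type) [MetricSpace X] [MeasurableSpace X] [BorelSpace X]
    (μ : Measure X) (p : ℝ) where
  F : Set (X → ℝ)
  Γ : (X → ℝ) → Measure X
  mem_Lp : ∀ f ∈ F, MemLp f (ENNReal.ofReal p) μ
  congr_ae : ∀ f ∈ F, ∀ g : X → ℝ, f =ᵐ[μ] g → Measurable g → g ∈ F ∧ Γ g = Γ f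
  energy_finite : ∀ f ∈ F, Γ f Set.univ ≠ ∞
  add_mem : ∀ f ∈ F, ∀ g ∈ F, f + g ∈ F
  smul_mem : ∀ (c : ℝ), ∀ f ∈ F, c • f ∈ F
  homogeneity : ∀ f ∈ F, ∀ c : ℝ, Γ (c • f) = ENNReal.ofReal (|c| ^ p) • Γ f
  triangle : ∀ f ∈ F, ∀ g ∈ F, ∀ A : Set X,
    (Γ (f + g) A) ^ (1 / p) ≤ (Γ f A) ^ (1 / p) + (Γ g A) ^ (1 / p)
  lipschitz_mem : ∀ f ∈ F, ∀ (L : NNReal) (g : ℝ → ℝ), LipschitzWith L g → g 0 = 0 →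
    g ∘ f ∈ F
  lipschitz_contract : ∀ f ∈ F, ∀ (L : NNReal) (g : ℝ → ℝ), LipschitzWith L g → g 0 = 0 →
    ∀ A : Set X, Γ (g ∘ f) A ≤ (L : ℝ≥0∞) ^ p * Γ f A
  locality : ∀ f ∈ F, ∀ A : Set X, IsOpen A → ∀ c : ℝ,
    (∀ᵐ x ∂(μ.restrict A), f x = c) → Γ f A = 0
  lsc : ∀ (f : X → ℝ) (fs : ℕ → X → ℝ), (∀ i, fs i ∈ F) → Measurable f →
    Tendsto (fun i => eLpNorm (fs i - f) (ENNReal.ofReal p) μ) atTop (nhds 0) →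
    (∃ M : ℝ≥0∞, M ≠ ∞ ∧ ∀ i, Γ (fs i) Set.univ ≤ M) →
    f ∈ F ∧ ∀ A : Set X, Γ f A ≤ liminf (fun i => Γ (fs i) A) atTop
  complete : ∀ fs : ℕ → X → ℝ, (∀ i, fs i ∈ F) →
    (∀ ε : ℝ≥0∞, 0 < ε → ∃ K, ∀ m ≥ K, ∀ n ≥ K,
      (eLpNorm (fs m - fs n) (ENNReal.ofReal p) μ) ^ p + Γ (fs m - fs n) Set.univ < ε) →
    ∃ f ∈ F, Tendsto (fun i =>
      (eLpNorm (fs i - f) (ENNReal.ofReal p) μ) ^ p + Γ (fs i - f) Set.univ) atTop (nhds 0)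
  regular_dense_F : ∀ f ∈ F, ∀ ε : ℝ, 0 < ε → ∃ g ∈ F, Continuous g ∧ HasCompactSupport g ∧
    (eLpNorm (f - g) (ENNReal.ofReal p) μ) ^ p + Γ (f - g) Set.univ < ENNReal.ofReal ε
  regular_dense_C : ∀ f : X → ℝ, Continuous f → HasCompactSupport f → ∀ ε : ℝ, 0 < ε →
    ∃ g ∈ F, Continuous g ∧ HasCompactSupport g ∧ ∀ x, |f x - g x| ≤ ε

namespace PDirichlet

variable {X : Type} [MetricSpace X] [MeasurableSpace X] [BorelSpace X]
  {μ : Measure X} {p : ℝ}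

/-- The `p`-th power of the `F_p`-norm, valued in `ℝ≥0∞`. -/
def fnormP (D : PDirichlet X μ p) (f : X → ℝ) : ℝ≥0∞ :=
  (∫⁻ x, ENNReal.ofReal (|f x| ^ p) ∂μ) + D.Γ f Set.univ

/-- Capacity of an open set. -/
def capOpen (D : PDirichlet X μ p) (O : Set X) : ℝ≥0∞ :=
  ⨅ (f : X → ℝ) (_ : f ∈ D.F) (_ : ∀ᵐ x ∂μ, x ∈ O → 1 ≤ f x), D.fnormP f

/-- Capacity of an arbitrary set, by outer regularity. -/
def cap (D : PDirichlet X μ p) (A : Set X) : ℝ≥0∞ :=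
  ⨅ (O : Set X) (_ : IsOpen O) (_ : A ⊆ O), D.capOpen O

/-- A function is quasicontinuous if it is continuous off open sets of arbitrarily small
capacity. -/
def QuasiCont (D : PDirichlet X μ p) (f : X → ℝ) : Prop :=
  ∀ ε : ℝ, 0 < ε → ∃ O : Set X, IsOpen O ∧ D.cap O < ENNReal.ofReal ε ∧ ContinuousOn f Oᶜ

end PDirichlet

/-- The `μ`-average of `f` over `A`. -/
def avgSet {X : Type} [MeasurableSpace X] (μ : Measure X) (A : Set X) (f : X → ℝ) : ℝ :=
  (μ A).toReal⁻¹ * ∫ y in A, f y ∂μ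

/-- A regular scale function (with constants `C_Ψ`, `β₊ ≥ β₋ > 0`). -/
def IsRegularScale {X : Type} [MetricSpace X] (Ψ : X → ℝ → ℝ) (C_Ψ βp βm : ℝ) : Prop :=
  (∀ x, Ψ x 0 = 0) ∧ (∀ x r, 0 < r → 0 < Ψ x r) ∧
  ∀ (x y : X) (s r : ℝ), 0 < s → s ≤ r →
    ENNReal.ofReal r ≤ 2 * EMetric.diam (Set.univ : Set X) →
    C_Ψ⁻¹ * ((max s (dist x y)) / r) ^ βp * (s / max r (dist x y)) ^ βm ≤ Ψ x r / Ψ y s ∧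
    Ψ x r / Ψ y s ≤ C_Ψ * (r / max r (dist x y)) ^ βm * ((max r (dist x y)) / s) ^ βp

/-- The capacity upper bound `Cap_p(Ψ)`. -/
def CapUB {X : Type} [MetricSpace X] [MeasurableSpace X] [BorelSpace X]
    {μ : Measure X} {p : ℝ} (D : PDirichlet X μ p) (Ψ : X → ℝ → ℝ) (Ccap : ℝ) : Prop :=
  ∀ (x : X) (r : ℝ), 0 < r → ∃ ψ ∈ D.F, Continuous ψ ∧
    (∀ y ∈ ball x r, ψ y = 1) ∧ (∀ y ∉ ball x (2 * r), ψ y = 0) ∧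
    D.Γ ψ Set.univ ≤ ENNReal.ofReal Ccap * μ (ball x r) / ENNReal.ofReal (Ψ x r)

/-- The Poincaré inequality `PI_p(Ψ)` (in the equivalent non-averaged form
`∫_B |f - f_B|^p dμ ≤ C_PI Ψ(B) Γ⟨f⟩(ΛB)`). -/
def PoincareIneq {X : Type} [MetricSpace X] [MeasurableSpace X] [BorelSpace X]
    {μ : Measure X} {p : ℝ} (D : PDirichlet X μ p) (Ψ : X → ℝ → ℝ) (CPI Λ : ℝ) : Prop :=
  ∀ (x : X) (r : ℝ), 0 < r → ∀ f ∈ D.F,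
    ∫⁻ y in ball x r, ENNReal.ofReal (|f y - avgSet μ (ball x r) f| ^ p) ∂μ ≤
      ENNReal.ofReal (CPI * Ψ x r) * D.Γ f (ball x (Λ * r))

/-- The measure `μ` is doubling (with finite positive measure on balls). -/
def DoublingMeasure' {X : Type} [MetricSpace X] [MeasurableSpace X] (μ : Measure X)
    (C_D : ℝ) : Prop :=
  (∀ (x : X) (r : ℝ), 0 < r → μ (ball x (2 * r)) ≤ ENNReal.ofReal C_D * μ (ball x r)) ∧
  (∀ (x : X) (r : ℝ), 0 < r → 0 < μ (ball x r) ∧ μ (ball x r) < ∞)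

end

open MeasureTheory Metric Set ENNReal Filter PDirichlet

/-- `u` is superharmonic in the open set `Ω`:
`Γ⟨u + ψ⟩(Ω ∩ spt ψ) ≥ Γ⟨u⟩(Ω ∩ spt ψ)` for every nonnegative `ψ ∈ F` vanishing off `Ω`. -/
def Superharmonic {X : Type} [MetricSpace X] [MeasurableSpace X] [BorelSpace X]
    {μ : Measure X} {p : ℝ} (D : PDirichlet X μ p) (Ω : Set X) (u : X → ℝ) : Prop :=
  ∀ ψ ∈ D.F, (∀ x, 0 ≤ ψ x) → (∀ x ∉ Ω, ψ x = 0) →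
    D.Γ u (Ω ∩ tsupport ψ) ≤ D.Γ (u + ψ) (Ω ∩ tsupport ψ)

namespace Stmt13Aux

variable {X : Type} [MetricSpace X] [MeasurableSpace X] [BorelSpace X]
  {μ : Measure X} {p : ℝ}

/-! ### Lipschitz helpers -/

lemma lip_shiftpos (ε : ℝ) : LipschitzWith 1 (fun t : ℝ => max (t - ε) 0) := by
  apply LipschitzWith.of_dist_le_mul
  intro x y
  rw [Real.dist_eq, Real.dist_eq, NNReal.coe_one, one_mul]
  calc |max (x - ε) 0 - max (y - ε) 0| ≤ |(x - ε) - (y - ε)| := abs_max_sub_max_le_abs _ _ _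
    _ = |x - y| := by ring_nf

lemma lip_pos : LipschitzWith 1 (fun t : ℝ => max t 0) := by
  apply LipschitzWith.of_dist_le_mul
  intro x y
  rw [Real.dist_eq, Real.dist_eq, NNReal.coe_one, one_mul]
  exact abs_max_sub_max_le_abs _ _ _

lemma lip_clamp : LipschitzWith 1 (fun t : ℝ => max (min t 1) 0) := by
  apply LipschitzWith.of_dist_le_mul
  intro x y
  rw [Real.dist_eq, Real.dist_eq, NNReal.coe_one, one_mul]
  calc |max (min x 1) 0 - max (min y 1) 0| ≤ |min x 1 - min y 1| :=
        abs_max_sub_max_le_abs _ _ _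
    _ ≤ max |x - y| |1 - 1| := abs_min_sub_min_le_max _ _ _ _
    _ = |x - y| := by simp

section D

variable (D : PDirichlet X μ p)

/-- 1-Lipschitz post-composition stays in `F` and contracts energy. -/
lemma gamma_lip {f : X → ℝ} (hf : f ∈ D.F) {g : ℝ → ℝ}
    (hg : LipschitzWith 1 g) (h0 : g 0 = 0) :
    g ∘ f ∈ D.F ∧ ∀ B : Set X, D.Γ (g ∘ f) B ≤ D.Γ f B := by
  refine ⟨D.lipschitz_mem f hf 1 g hg h0, fun B => ?_⟩
  have := D.lipschitz_contract f hf 1 g hg h0 B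
  simpa using this

lemma rpow_recover (hp0 : 0 < p) (x : ℝ≥0∞) : (x ^ (1/p)) ^ p = x := by
  rw [← ENNReal.rpow_mul, one_div_mul_cancel (ne_of_gt hp0), ENNReal.rpow_one]

lemma rpow_recover' (hp0 : 0 < p) (x : ℝ≥0∞) : (x ^ p) ^ (1/p) = x := by
  rw [← ENNReal.rpow_mul, mul_one_div_cancel (ne_of_gt hp0), ENNReal.rpow_one]

lemma gamma_add_le (hp0 : 0 < p) {f g : X → ℝ} (hf : f ∈ D.F) (hg : g ∈ D.F) (B : Set X) :
    D.Γ (f + g) B ≤ (D.Γ f B ^ (1/p) + D.Γ g B ^ (1/p)) ^ p := by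
  have h := D.triangle f hf g hg B
  calc D.Γ (f+g) B = (D.Γ (f+g) B ^ (1/p)) ^ p := (rpow_recover hp0 _).symm
    _ ≤ _ := ENNReal.rpow_le_rpow h hp0.le

lemma gamma_add_le_of_right_zero (hp0 : 0 < p) {f g : X → ℝ} (hf : f ∈ D.F) (hg : g ∈ D.F)
    {B : Set X} (hB : D.Γ g B = 0) : D.Γ (f + g) B ≤ D.Γ f B := by
  have h := gamma_add_le D hp0 hf hg B
  rwa [hB, ENNReal.zero_rpow_of_pos (by positivity : (0:ℝ) < 1/p), add_zero,
    rpow_recover hp0] at h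

/-! ### Good pairs (quasicontinuity witnesses) -/

/-- A witness for quasicontinuity with explicit capacity test function. -/
def GoodPair (d : X → ℝ) (ε : ℝ) (O : Set X) (T : X → ℝ) : Prop :=
  IsOpen O ∧ ContinuousOn d Oᶜ ∧ T ∈ D.F ∧ (∀ x, 0 ≤ T x) ∧
    (∀ᵐ x ∂μ, x ∈ O → 1 ≤ T x) ∧
    (∫⁻ x, ENNReal.ofReal (|T x| ^ p) ∂μ) ≤ ENNReal.ofReal ε ∧
    D.Γ T Set.univ ≤ ENNReal.ofReal ε

lemma goodPair_mono {d : X → ℝ} {ε ε' : ℝ} (hεε : ε ≤ ε') {O : Set X} {T : X → ℝ}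
    (h : GoodPair D d ε O T) : GoodPair D d ε' O T := by
  obtain ⟨h1, h2, h3, h4, h5, h6, h7⟩ := h
  exact ⟨h1, h2, h3, h4, h5, h6.trans (ENNReal.ofReal_le_ofReal hεε),
    h7.trans (ENNReal.ofReal_le_ofReal hεε)⟩

/-- Extraction of a good pair from quasicontinuity. -/
lemma quasiCont_goodPair (hp0 : 0 < p) {d : X → ℝ} (hd : D.QuasiCont d)
    {ε : ℝ} (hε : 0 < ε) : ∃ O T, GoodPair D d ε O T := by
  obtain ⟨O, hO, hcap, hcont⟩ := hd ε hε
  rw [PDirichlet.cap, iInf_lt_iff] at hcap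
  obtain ⟨O', hcap⟩ := hcap
  rw [iInf_lt_iff] at hcap
  obtain ⟨hO', hcap⟩ := hcap
  rw [iInf_lt_iff] at hcap
  obtain ⟨hOO', hcap⟩ := hcap
  rw [PDirichlet.capOpen, iInf_lt_iff] at hcap
  obtain ⟨f, hcap⟩ := hcap
  rw [iInf_lt_iff] at hcap
  obtain ⟨hfF, hcap⟩ := hcap
  rw [iInf_lt_iff] at hcap
  obtain ⟨hfae, hcap⟩ := hcap
  rw [PDirichlet.fnormP] at hcap
  have hint : (∫⁻ x, ENNReal.ofReal (|f x| ^ p) ∂μ) ≤ ENNReal.ofReal ε :=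
    le_of_lt (lt_of_le_of_lt le_self_add hcap)
  have hΓ : D.Γ f Set.univ ≤ ENNReal.ofReal ε :=
    le_of_lt (lt_of_le_of_lt le_add_self hcap)
  refine ⟨O', (fun t => max t 0) ∘ f, hO', hcont.mono (compl_subset_compl.mpr hOO'),
    (gamma_lip D hfF lip_pos (by simp)).1, fun x => le_max_right _ _, ?_, ?_, ?_⟩
  · filter_upwards [hfae] with x hx hmem
    exact (hx hmem).trans (le_max_left _ _)
  · refine le_trans (lintegral_mono fun x => ?_) hint
    apply ENNReal.ofReal_le_ofReal
    apply Real.rpow_le_rpow (abs_nonneg _) _ hp0.le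
    rw [Function.comp_apply, abs_of_nonneg (le_max_right _ _)]
    exact max_le (le_abs_self _) (abs_nonneg _)
  · exact ((gamma_lip D hfF lip_pos (by simp)).2 Set.univ).trans hΓ

/-! ### combining good pairs -/

lemma two_rpow_eq (hp0 : 0 < p) : (2 : ℝ≥0∞) ^ p = ENNReal.ofReal ((2:ℝ) ^ p) := by
  rw [← ENNReal.ofReal_rpow_of_nonneg (by norm_num) hp0.le]
  norm_num

lemma real_add_rpow (hp0 : 0 < p) {a b : ℝ} (ha : 0 ≤ a) (hb : 0 ≤ b) :
    (a + b) ^ p ≤ 2 ^ p * (a ^ p + b ^ p) := by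
  have h1 : a + b ≤ 2 * max a b := by
    rcases le_total a b with h | h
    · rw [max_eq_right h]; linarith
    · rw [max_eq_left h]; linarith
  have h2 : (a + b) ^ p ≤ (2 * max a b) ^ p :=
    Real.rpow_le_rpow (by positivity) h1 hp0.le
  rw [Real.mul_rpow (by norm_num) (le_max_of_le_left ha)] at h2
  refine h2.trans (mul_le_mul_of_nonneg_left ?_ (by positivity))
  rcases le_total a b with h | h
  · rw [max_eq_right h]; have := Real.rpow_nonneg ha p; linarith
  · rw [max_eq_left h]; have := Real.rpow_nonneg hb p; linarith

lemma ennreal_add_rpow (hp0 : 0 < p) (x y : ℝ≥0∞) :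
    (x ^ (1/p) + y ^ (1/p)) ^ p ≤ ENNReal.ofReal ((2:ℝ) ^ p) * (x + y) := by
  have hmax : x ^ (1/p) + y ^ (1/p) ≤ 2 * (max x y) ^ (1/p) := by
    have hx : x ^ (1/p) ≤ (max x y) ^ (1/p) :=
      ENNReal.rpow_le_rpow (le_max_left _ _) (by positivity)
    have hy : y ^ (1/p) ≤ (max x y) ^ (1/p) :=
      ENNReal.rpow_le_rpow (le_max_right _ _) (by positivity)
    calc x ^ (1/p) + y ^ (1/p) ≤ (max x y) ^ (1/p) + (max x y) ^ (1/p) := add_le_add hx hy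
      _ = 2 * (max x y) ^ (1/p) := (two_mul _).symm
  calc (x ^ (1/p) + y ^ (1/p)) ^ p ≤ (2 * (max x y) ^ (1/p)) ^ p :=
        ENNReal.rpow_le_rpow hmax hp0.le
    _ = 2 ^ p * max x y := by
        rw [ENNReal.mul_rpow_of_nonneg _ _ hp0.le, rpow_recover hp0]
    _ ≤ ENNReal.ofReal ((2:ℝ) ^ p) * (x + y) := by
        rw [← two_rpow_eq hp0]
        exact mul_le_mul_right (max_le le_self_add le_add_self) _

lemma goodPair_union (hp0 : 0 < p) {d₁ d₂ d₃ : X → ℝ} {ε₁ ε₂ : ℝ} {O₁ O₂ : Set X}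
    {T₁ T₂ : X → ℝ} (hε₁ : 0 ≤ ε₁) (hε₂ : 0 ≤ ε₂)
    (g₁ : GoodPair D d₁ ε₁ O₁ T₁) (g₂ : GoodPair D d₂ ε₂ O₂ T₂)
    (hc : ContinuousOn d₃ (O₁ ∪ O₂)ᶜ) :
    GoodPair D d₃ ((2:ℝ) ^ p * (ε₁ + ε₂)) (O₁ ∪ O₂) (T₁ + T₂) := by
  obtain ⟨hO₁, -, hT₁F, hT₁0, hT₁ae, hT₁int, hT₁Γ⟩ := g₁
  obtain ⟨hO₂, -, hT₂F, hT₂0, hT₂ae, hT₂int, hT₂Γ⟩ := g₂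
  have hofreal : ENNReal.ofReal ((2:ℝ)^p * (ε₁ + ε₂)) =
      ENNReal.ofReal ((2:ℝ)^p) * (ENNReal.ofReal ε₁ + ENNReal.ofReal ε₂) := by
    rw [ENNReal.ofReal_mul (by positivity), ENNReal.ofReal_add hε₁ hε₂]
  refine ⟨hO₁.union hO₂, hc, D.add_mem _ hT₁F _ hT₂F,
    fun x => by have := hT₁0 x; have := hT₂0 x; simp only [Pi.add_apply]; linarith, ?_, ?_, ?_⟩
  · filter_upwards [hT₁ae, hT₂ae] with x h1 h2 hmem
    rcases hmem with hm | hm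
    · have := h1 hm; have := hT₂0 x; simp only [Pi.add_apply]; linarith
    · have := h2 hm; have := hT₁0 x; simp only [Pi.add_apply]; linarith
  · rw [hofreal]
    have hptwise : ∀ x, ENNReal.ofReal (|(T₁ + T₂) x| ^ p) ≤
        ENNReal.ofReal ((2:ℝ)^p) * (ENNReal.ofReal (|T₁ x| ^ p) + ENNReal.ofReal (|T₂ x| ^ p)) := by
      intro x
      rw [← ENNReal.ofReal_add (by positivity) (by positivity),
        ← ENNReal.ofReal_mul (by positivity)]
      apply ENNReal.ofReal_le_ofReal
      have h1 : |(T₁ + T₂) x| = |T₁ x| + |T₂ x| := by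
        simp only [Pi.add_apply]
        rw [abs_of_nonneg (by have := hT₁0 x; have := hT₂0 x; linarith),
          abs_of_nonneg (hT₁0 x), abs_of_nonneg (hT₂0 x)]
      rw [h1]
      exact real_add_rpow hp0 (abs_nonneg _) (abs_nonneg _)
    have hmeas₁ : AEMeasurable (fun x => ENNReal.ofReal (|T₁ x| ^ p)) μ := by
      have hT : AEMeasurable T₁ μ := (D.mem_Lp _ hT₁F).aestronglyMeasurable.aemeasurable
      exact (ENNReal.continuous_ofReal.comp
        ((Real.continuous_rpow_const hp0.le).comp continuous_abs)).measurable.comp_aemeasurable hT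
    calc (∫⁻ x, ENNReal.ofReal (|(T₁ + T₂) x| ^ p) ∂μ)
        ≤ ∫⁻ x, ENNReal.ofReal ((2:ℝ)^p) *
            (ENNReal.ofReal (|T₁ x| ^ p) + ENNReal.ofReal (|T₂ x| ^ p)) ∂μ :=
          lintegral_mono hptwise
      _ = ENNReal.ofReal ((2:ℝ)^p) *
            ∫⁻ x, (ENNReal.ofReal (|T₁ x| ^ p) + ENNReal.ofReal (|T₂ x| ^ p)) ∂μ :=
          lintegral_const_mul' _ _ ENNReal.ofReal_ne_top
      _ = ENNReal.ofReal ((2:ℝ)^p) *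
            ((∫⁻ x, ENNReal.ofReal (|T₁ x| ^ p) ∂μ) + ∫⁻ x, ENNReal.ofReal (|T₂ x| ^ p) ∂μ) := by
          rw [lintegral_add_left' hmeas₁]
      _ ≤ _ := mul_le_mul_right (add_le_add hT₁int hT₂int) _
  · rw [hofreal]
    calc D.Γ (T₁ + T₂) Set.univ
        ≤ (D.Γ T₁ Set.univ ^ (1/p) + D.Γ T₂ Set.univ ^ (1/p)) ^ p :=
          gamma_add_le D hp0 hT₁F hT₂F _
      _ ≤ ENNReal.ofReal ((2:ℝ)^p) * (D.Γ T₁ Set.univ + D.Γ T₂ Set.univ) :=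
          ennreal_add_rpow hp0 _ _
      _ ≤ _ := mul_le_mul_right (add_le_add hT₁Γ hT₂Γ) _

end D

end Stmt13Aux
namespace Stmt13Aux
open scoped Classical

variable {X : Type} [MetricSpace X] [MeasurableSpace X] [BorelSpace X]
  {μ : Measure X} {p : ℝ}

lemma measurable_glue {f : X → ℝ} {O : ℕ → Set X} (hO : ∀ n, IsOpen (O n))
    (hc : ∀ n, ContinuousOn f (O n)ᶜ) :
    Measurable (fun x => if x ∈ ⋃ n, (O n)ᶜ then f x else 0) := by
  apply measurable_of_isOpen
  intro s hs
  have key : ∀ n, ∃ u, IsOpen u ∧ f ⁻¹' s ∩ (O n)ᶜ = u ∩ (O n)ᶜ := fun n =>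
    continuousOn_iff'.mp (hc n) s hs
  choose U hUopen hUeq using key
  by_cases h0 : (0:ℝ) ∈ s
  · have heq : (fun x => if x ∈ ⋃ n, (O n)ᶜ then f x else 0) ⁻¹' s =
        (⋃ n, (U n ∩ (O n)ᶜ)) ∪ (⋂ n, O n) := by
      ext x
      show (if x ∈ ⋃ n, (O n)ᶜ then f x else 0) ∈ s ↔ _
      by_cases hx : x ∈ ⋃ n, (O n)ᶜ
      · rw [if_pos hx]
        constructor
        · intro hfx
          obtain ⟨n, hn⟩ : ∃ n, x ∈ (O n)ᶜ := by simpa using hx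
          have hun : x ∈ U n ∩ (O n)ᶜ := (hUeq n) ▸ (⟨hfx, hn⟩ : x ∈ f ⁻¹' s ∩ (O n)ᶜ)
          exact Or.inl (Set.mem_iUnion.mpr ⟨n, hun⟩)
        · intro hmem
          rcases hmem with hUU | hI
          · obtain ⟨n, hn⟩ := Set.mem_iUnion.mp hUU
            have : x ∈ f ⁻¹' s ∩ (O n)ᶜ := (hUeq n).symm ▸ hn
            exact this.1
          · exfalso
            obtain ⟨n, hn⟩ : ∃ n, x ∈ (O n)ᶜ := by simpa using hx
            exact hn (Set.mem_iInter.mp hI n)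
      · rw [if_neg hx]
        have hxi : x ∈ ⋂ n, O n := by
          simp only [Set.mem_iUnion, Set.mem_compl_iff, not_exists, not_not] at hx
          exact Set.mem_iInter.mpr hx
        exact ⟨fun _ => Or.inr hxi, fun _ => h0⟩
    rw [heq]
    exact (MeasurableSet.iUnion fun n =>
      (hUopen n).measurableSet.inter (hO n).measurableSet.compl).union
      (MeasurableSet.iInter fun n => (hO n).measurableSet)
  · have heq : (fun x => if x ∈ ⋃ n, (O n)ᶜ then f x else 0) ⁻¹' s =
        ⋃ n, (U n ∩ (O n)ᶜ) := by
      ext x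
      show (if x ∈ ⋃ n, (O n)ᶜ then f x else 0) ∈ s ↔ _
      by_cases hx : x ∈ ⋃ n, (O n)ᶜ
      · rw [if_pos hx]
        constructor
        · intro hfx
          obtain ⟨n, hn⟩ : ∃ n, x ∈ (O n)ᶜ := by simpa using hx
          exact Set.mem_iUnion.mpr ⟨n, (hUeq n) ▸ (⟨hfx, hn⟩ : x ∈ f ⁻¹' s ∩ (O n)ᶜ)⟩
        · intro hmem
          obtain ⟨n, hn⟩ := Set.mem_iUnion.mp hmem
          exact ((hUeq n).symm ▸ hn : x ∈ f ⁻¹' s ∩ (O n)ᶜ).1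
      · rw [if_neg hx]
        constructor
        · intro hfx; exact absurd hfx h0
        · intro hmem
          obtain ⟨n, hn⟩ := Set.mem_iUnion.mp hmem
          exact absurd (Set.mem_iUnion.mpr ⟨n, hn.2⟩) hx
    rw [heq]
    exact MeasurableSet.iUnion fun n =>
      (hUopen n).measurableSet.inter (hO n).measurableSet.compl

section D

variable (D : PDirichlet X μ p)

lemma inter_null (hp0 : 0 < p) {d : X → ℝ} {O : ℕ → Set X} {T : ℕ → X → ℝ}
    (hg : ∀ n : ℕ, GoodPair D d ((1/2:ℝ)^(n+1)) (O n) (T n)) :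
    μ (⋂ n, O n) = 0 := by
  have hO : ∀ n, μ (O n) ≤ ENNReal.ofReal ((1/2:ℝ)^(n+1)) := by
    intro n
    obtain ⟨hOn, -, -, -, hae, hint, -⟩ := hg n
    have h1 : μ (O n) = ∫⁻ _ in O n, 1 ∂μ := (setLIntegral_one _).symm
    have h2 : (∫⁻ _ in O n, 1 ∂μ) ≤ ∫⁻ x in O n, ENNReal.ofReal (|T n x| ^ p) ∂μ := by
      apply lintegral_mono_ae
      filter_upwards [ae_restrict_of_ae hae, ae_restrict_mem hOn.measurableSet] with x hx hmem
      have h3 : 1 ≤ T n x := hx hmem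
      have h4 : (1:ℝ) ≤ |T n x| ^ p := by
        rw [abs_of_nonneg (by linarith)]
        calc (1:ℝ) = 1 ^ p := (Real.one_rpow p).symm
          _ ≤ (T n x) ^ p := Real.rpow_le_rpow one_pos.le h3 hp0.le
      calc (1:ℝ≥0∞) = ENNReal.ofReal 1 := by simp
        _ ≤ _ := ENNReal.ofReal_le_ofReal h4
    have h3 : (∫⁻ x in O n, ENNReal.ofReal (|T n x| ^ p) ∂μ) ≤
        ∫⁻ x, ENNReal.ofReal (|T n x| ^ p) ∂μ := lintegral_mono' Measure.restrict_le_self le_rfl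
    exact (h1 ▸ h2.trans h3).trans hint
  have hmono : ∀ n, μ (⋂ m, O m) ≤ ENNReal.ofReal ((1/2:ℝ)^(n+1)) :=
    fun n => (measure_mono (Set.iInter_subset _ n)).trans (hO n)
  have htend : Tendsto (fun n : ℕ => ENNReal.ofReal ((1/2:ℝ)^(n+1))) atTop (nhds 0) := by
    rw [show (0:ℝ≥0∞) = ENNReal.ofReal 0 by simp]
    apply ENNReal.tendsto_ofReal
    have h := tendsto_pow_atTop_nhds_zero_of_lt_one (by norm_num : (0:ℝ) ≤ 1/2)
      (by norm_num : (1/2:ℝ) < 1)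
    exact h.comp (tendsto_add_atTop_nat 1)
  exact le_antisymm (ge_of_tendsto' htend hmono) zero_le

/-- Measurable surgery: replace a quasicontinuous function in `F` by a measurable version
agreeing with it off the exceptional sets. -/
lemma surgery (hp0 : 0 < p) {f : X → ℝ} (hf : f ∈ D.F) (hfq : D.QuasiCont f) :
    ∃ (f' : X → ℝ) (O : ℕ → Set X) (T : ℕ → X → ℝ),
      Measurable f' ∧ f' ∈ D.F ∧ D.Γ f' = D.Γ f ∧ f' =ᵐ[μ] f ∧
      (∀ x, f' x = f x ∨ f' x = 0) ∧
      (∀ n, GoodPair D f ((1/2:ℝ)^(n+1)) (O n) (T n)) ∧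
      (∀ n, ∀ x ∈ (O n)ᶜ, f' x = f x) := by
  have hex : ∀ n : ℕ, ∃ O T, GoodPair D f ((1/2:ℝ)^(n+1)) O T := fun n =>
    quasiCont_goodPair D hp0 hfq (by positivity)
  choose O T hg using hex
  set f' : X → ℝ := fun x => if x ∈ ⋃ n, (O n)ᶜ then f x else 0 with hf'
  have hOopen : ∀ n, IsOpen (O n) := fun n => (hg n).1
  have hmeas : Measurable f' := measurable_glue hOopen (fun n => (hg n).2.1)
  have hagree : ∀ n, ∀ x ∈ (O n)ᶜ, f' x = f x := by
    intro n x hx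
    have hmem : x ∈ ⋃ m, (O m)ᶜ := Set.mem_iUnion.mpr ⟨n, hx⟩
    show (if x ∈ ⋃ m, (O m)ᶜ then f x else 0) = f x
    rw [if_pos hmem]
  have hae : f' =ᵐ[μ] f := by
    have hnull : μ (⋂ n, O n) = 0 := inter_null D hp0 hg
    have hsub : {x | ¬ f' x = f x} ⊆ ⋂ n, O n := by
      intro x hx
      by_contra hxc
      obtain ⟨n, hn⟩ : ∃ n, x ∉ O n := by simpa using hxc
      exact hx (hagree n x hn)
    exact measure_mono_null hsub hnull
  have hmem := D.congr_ae f hf f' hae.symm hmeas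
  refine ⟨f', O, T, hmeas, hmem.1, hmem.2, hae, fun x => ?_, hg, hagree⟩
  by_cases hx : x ∈ ⋃ n, (O n)ᶜ
  · exact Or.inl (by show (if x ∈ ⋃ n, (O n)ᶜ then f x else 0) = f x; rw [if_pos hx])
  · exact Or.inr (by show (if x ∈ ⋃ n, (O n)ᶜ then f x else 0) = 0; rw [if_neg hx])

lemma exists_small (ε : ℝ) (hε : 0 < ε) : ∃ n : ℕ, ((1/2:ℝ))^(n+1) ≤ ε := by
  obtain ⟨n, hn⟩ := exists_pow_lt_of_lt_one hε (by norm_num : (1/2:ℝ) < 1)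
  exact ⟨n, le_of_lt (lt_of_le_of_lt
    (pow_le_pow_of_le_one (by norm_num) (by norm_num) (Nat.le_succ n)) hn)⟩

end D

end Stmt13Aux
namespace Stmt13Aux
open scoped Classical

variable {X : Type} [MetricSpace X] [MeasurableSpace X] [BorelSpace X]
  {μ : Measure X} {p : ℝ}

lemma abs_truncdiff {t s e : ℝ} (hs : 0 ≤ s) (he : 0 ≤ e) :
    |max (t - s - e) 0 - max t 0| ≤ s + min (max t 0) e := by
  rcases le_total t 0 with ht | ht
  · rw [max_eq_right ht, max_eq_right (by linarith : t - s - e ≤ 0), sub_zero, abs_zero]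
    have h1 : (0:ℝ) ≤ min 0 e := le_min le_rfl he
    linarith
  · rw [max_eq_left ht]
    rcases le_total (t - s - e) 0 with h1 | h1
    · rw [max_eq_right h1, zero_sub, abs_neg, abs_of_nonneg ht]
      rcases le_total t e with h2 | h2
      · rw [min_eq_left h2]; linarith
      · rw [min_eq_right h2]; linarith
    · rw [max_eq_left h1]
      have h2 : e ≤ t := by linarith
      rw [min_eq_right h2, show t - s - e - t = -(s+e) by ring, abs_neg,
        abs_of_nonneg (by linarith : (0:ℝ) ≤ s + e)]

section D

variable (D : PDirichlet X μ p)

/-- Key zero-set lemma: the energy measure of the positive part of a bounded, measurable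
function in `F` with quasicontinuity witnesses does not charge the set where it is
nonpositive. -/
lemma zeroset (hp : 1 < p) {v : X → ℝ} (hvF : v ∈ D.F) (hvm : Measurable v)
    (hv1 : ∀ x, v x ≤ 1)
    (good : ∀ ε : ℝ, 0 < ε → ∃ O T, GoodPair D v ε O T) :
    D.Γ (fun x => max (v x) 0) {x | v x ≤ 0} = 0 := by
  have hp0 : 0 < p := one_pos.trans hp
  set e : ℕ → ℝ := fun n => (1/2:ℝ) ^ (n+1) with he
  have hepos : ∀ n, 0 < e n := fun n => by positivity
  have he1 : ∀ n, e n ≤ 1 := by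
    intro n
    rw [he]
    calc ((1:ℝ)/2) ^ (n+1) ≤ 1 ^ (n+1) := by
          apply pow_le_pow_left₀ (by norm_num) (by norm_num)
      _ = 1 := one_pow _
  have hgood : ∀ n, ∃ O T, GoodPair D v ((e n) ^ p) O T := fun n =>
    good _ (Real.rpow_pos_of_pos (hepos n) p)
  choose O T hgp using hgood
  have hOopen : ∀ n, IsOpen (O n) := fun n => (hgp n).1
  have hcont : ∀ n, ContinuousOn v (O n)ᶜ := fun n => (hgp n).2.1
  have hTF : ∀ n, T n ∈ D.F := fun n => (hgp n).2.2.1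
  have hT0 : ∀ n x, 0 ≤ T n x := fun n => (hgp n).2.2.2.1
  have hTae : ∀ n, ∀ᵐ x ∂μ, x ∈ O n → 1 ≤ T n x := fun n => (hgp n).2.2.2.2.1
  have hTint : ∀ n, (∫⁻ x, ENNReal.ofReal (|T n x| ^ p) ∂μ) ≤ ENNReal.ofReal ((e n)^p) :=
    fun n => (hgp n).2.2.2.2.2.1
  have hTΓ : ∀ n, D.Γ (T n) Set.univ ≤ ENNReal.ofReal ((e n)^p) :=
    fun n => (hgp n).2.2.2.2.2.2
  -- the approximating sequence
  set z : ℕ → X → ℝ := fun n x => max (v x - 2 * T n x - e n) 0 with hz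
  have hzcomp : ∀ n, (fun t => max (t - e n) 0) ∘ (v + (-2:ℝ) • T n) = z n := by
    intro n; funext x
    simp only [Function.comp_apply, Pi.add_apply, Pi.smul_apply, smul_eq_mul, hz]
    ring_nf
  have hbase : ∀ n, v + (-2:ℝ) • T n ∈ D.F := fun n =>
    D.add_mem v hvF _ (D.smul_mem (-2) (T n) (hTF n))
  have hg0 : ∀ n, (fun t : ℝ => max (t - e n) 0) 0 = 0 := by
    intro n
    simp only [zero_sub]
    exact max_eq_right (by linarith [hepos n])
  have hzF : ∀ n, z n ∈ D.F := fun n =>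
    (hzcomp n) ▸ (gamma_lip D (hbase n) (lip_shiftpos (e n)) (hg0 n)).1
  have hzΓ : ∀ n, ∀ B : Set X, D.Γ (z n) B ≤ D.Γ (v + (-2:ℝ) • T n) B := fun n B =>
    (hzcomp n) ▸ (gamma_lip D (hbase n) (lip_shiftpos (e n)) (hg0 n)).2 B
  -- relatively open sublevel sets
  have hWex : ∀ n, ∃ Wn, IsOpen Wn ∧ v ⁻¹' (Set.Iio (e n)) ∩ (O n)ᶜ = Wn ∩ (O n)ᶜ := fun n =>
    continuousOn_iff'.mp (hcont n) _ isOpen_Iio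
  choose W hWopen hWeq using hWex
  -- locality kill
  have hkill : ∀ n, D.Γ (z n) (O n ∪ W n) = 0 := by
    intro n
    apply D.locality (z n) (hzF n) _ ((hOopen n).union (hWopen n)) 0
    have hee : 0 ≤ e n := (hepos n).le
    have hnull : μ {x | x ∈ O n ∧ ¬ (1 ≤ T n x)} = 0 := by
      have h := ae_iff.mp (hTae n)
      simpa [Classical.not_imp] using h
    rw [ae_iff, Measure.restrict_apply' ((hOopen n).union (hWopen n)).measurableSet]
    refine measure_mono_null ?_ hnull
    rintro x ⟨hxz, hxU⟩
    have harg : 0 < v x - 2 * T n x - e n := by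
      by_contra hcon
      push_neg at hcon
      exact hxz (max_eq_right hcon)
    rcases hxU with hxO | hxW
    · refine ⟨hxO, fun hT1 => ?_⟩
      have := hv1 x
      linarith
    · by_cases hxO : x ∈ O n
      · refine ⟨hxO, fun hT1 => ?_⟩
        have := hv1 x
        linarith
      · exfalso
        have hxWO : x ∈ W n ∩ (O n)ᶜ := ⟨hxW, hxO⟩
        rw [← hWeq n] at hxWO
        have hvlt : v x < e n := hxWO.1
        have := hT0 n x
        linarith
  -- coverage
  have hcov : ∀ n, {x | v x ≤ 0} ⊆ O n ∪ W n := by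
    intro n x hx
    by_cases hxO : x ∈ O n
    · exact Or.inl hxO
    · right
      have hmem : x ∈ v ⁻¹' (Set.Iio (e n)) ∩ (O n)ᶜ := ⟨lt_of_le_of_lt hx (hepos n), hxO⟩
      rw [hWeq n] at hmem
      exact hmem.1
  have hzzero : ∀ n, D.Γ (z n) {x | v x ≤ 0} = 0 := fun n =>
    measure_mono_null (hcov n) (hkill n)
  -- pointwise bound
  have habs : ∀ n x, |z n x - max (v x) 0| ≤ 2 * T n x + min (max (v x) 0) (e n) := by
    intro n x
    have := hT0 n x
    exact abs_truncdiff (by linarith) (hepos n).le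
  -- eLpNorm helpers
  have hof : ENNReal.ofReal p ≠ 0 := by
    simp only [ne_eq, ENNReal.ofReal_eq_zero, not_le]
    exact hp0
  have hof2 : ENNReal.ofReal p ≠ ⊤ := ENNReal.ofReal_ne_top
  have htoReal : (ENNReal.ofReal p).toReal = p := ENNReal.toReal_ofReal hp0.le
  have hptw : ∀ (g : X → ℝ) (x : X), (‖g x‖₊ : ℝ≥0∞) ^ p = ENNReal.ofReal (|g x| ^ p) := by
    intro g x
    rw [← enorm_eq_nnnorm, Real.enorm_eq_ofReal_abs, ENNReal.ofReal_rpow_of_nonneg (abs_nonneg _) hp0.le]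
  have hT_eLp : ∀ n, eLpNorm (T n) (ENNReal.ofReal p) μ ≤ ENNReal.ofReal (e n) := by
    intro n
    rw [eLpNorm_eq_lintegral_rpow_enorm_toReal hof hof2, htoReal]
    have hle : (∫⁻ x, (‖T n x‖₊ : ℝ≥0∞) ^ p ∂μ) ≤ ENNReal.ofReal ((e n) ^ p) := by
      calc (∫⁻ x, (‖T n x‖₊ : ℝ≥0∞) ^ p ∂μ) = ∫⁻ x, ENNReal.ofReal (|T n x| ^ p) ∂μ := by
            congr 1; funext x; exact hptw (T n) x
        _ ≤ _ := hTint n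
    calc (∫⁻ x, (‖T n x‖₊ : ℝ≥0∞) ^ p ∂μ) ^ (1/p) ≤ (ENNReal.ofReal ((e n)^p)) ^ (1/p) :=
          ENNReal.rpow_le_rpow hle (by positivity)
      _ = ENNReal.ofReal (e n) := by
          rw [← ENNReal.ofReal_rpow_of_nonneg (hepos n).le hp0.le, rpow_recover' hp0]
  have hvint : (∫⁻ x, ENNReal.ofReal (|v x| ^ p) ∂μ) ≠ ⊤ := by
    have hmem := D.mem_Lp v hvF
    have hlt := hmem.2
    rw [eLpNorm_eq_lintegral_rpow_enorm_toReal hof hof2, htoReal] at hlt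
    intro hcon
    rw [show (∫⁻ x, ENNReal.ofReal (|v x| ^ p) ∂μ) = ∫⁻ x, (‖v x‖₊ : ℝ≥0∞) ^ p ∂μ by
      congr 1; funext x; exact (hptw v x).symm] at hcon
    simp only [enorm_eq_nnnorm] at hlt
    rw [hcon, ENNReal.top_rpow_of_pos (by positivity)] at hlt
    exact absurd hlt (lt_irrefl _)
  -- dominated convergence for the min-part
  have hdct : Tendsto (fun n => ∫⁻ x, ENNReal.ofReal ((min (max (v x) 0) (e n)) ^ p) ∂μ)
      atTop (nhds 0) := by
    have h0eq : (0:ℝ≥0∞) = ∫⁻ _x, (0:ℝ≥0∞) ∂μ := lintegral_zero.symm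
    rw [h0eq]
    apply tendsto_lintegral_of_dominated_convergence (fun x => ENNReal.ofReal (|v x| ^ p))
    · intro n
      exact ENNReal.measurable_ofReal.comp ((Real.continuous_rpow_const hp0.le).measurable.comp
        ((hvm.max measurable_const).min measurable_const))
    · intro n
      refine Filter.Eventually.of_forall fun x => ENNReal.ofReal_le_ofReal ?_
      apply Real.rpow_le_rpow (le_min (le_max_right _ _) (hepos n).le)
        ((min_le_left _ _).trans (max_le (le_abs_self _) (abs_nonneg _))) hp0.le
    · exact hvint
    · refine Filter.Eventually.of_forall fun x => ?_
      have hetend : Tendsto e atTop (nhds 0) := by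
        have h := tendsto_pow_atTop_nhds_zero_of_lt_one (by norm_num : (0:ℝ) ≤ 1/2)
          (by norm_num : (1/2:ℝ) < 1)
        exact h.comp (tendsto_add_atTop_nat 1)
      have hmin : Tendsto (fun n => min (max (v x) 0) (e n)) atTop (nhds 0) := by
        have h := (tendsto_const_nhds (x := max (v x) 0) (f := atTop)).min hetend
        rwa [min_eq_right (le_max_right (v x) 0)] at h
      have hcont0 : ContinuousAt (fun t : ℝ => ENNReal.ofReal (t ^ p)) 0 := by
        apply ENNReal.continuous_ofReal.continuousAt.comp
        have h := Real.continuousAt_rpow_const 0 p (Or.inr hp0.le)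
        exact h
      have h := hcont0.tendsto.comp hmin
      simpa [Function.comp_def, Real.zero_rpow (ne_of_gt hp0)] using h
  -- eLpNorm bound
  have hbnd : ∀ n, eLpNorm (z n - fun x => max (v x) 0) (ENNReal.ofReal p) μ ≤
      2 * ENNReal.ofReal (e n) +
        (∫⁻ x, ENNReal.ofReal ((min (max (v x) 0) (e n)) ^ p) ∂μ) ^ (1/p) := by
    intro n
    have ha1 : AEStronglyMeasurable ((2:ℝ) • T n) μ :=
      ((D.mem_Lp _ (hTF n)).aestronglyMeasurable).const_smul (2:ℝ)
    have ha2 : AEStronglyMeasurable (fun x => min (max (v x) 0) (e n)) μ :=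
      ((hvm.max measurable_const).min measurable_const).aestronglyMeasurable
    have h1 : eLpNorm (z n - fun x => max (v x) 0) (ENNReal.ofReal p) μ ≤
        eLpNorm ((2:ℝ) • T n + fun x => min (max (v x) 0) (e n)) (ENNReal.ofReal p) μ := by
      apply eLpNorm_mono_ae
      refine Filter.Eventually.of_forall fun x => ?_
      have hb := habs n x
      have hmin0 : (0:ℝ) ≤ min (max (v x) 0) (e n) := le_min (le_max_right _ _) (hepos n).le
      have hT := hT0 n x
      calc ‖(z n - fun x => max (v x) 0) x‖ = |z n x - max (v x) 0| := by
            simp [Real.norm_eq_abs]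
        _ ≤ 2 * T n x + min (max (v x) 0) (e n) := hb
        _ ≤ ‖((2:ℝ) • T n + fun x => min (max (v x) 0) (e n)) x‖ := by
            simp only [Pi.add_apply, Pi.smul_apply, smul_eq_mul, Real.norm_eq_abs]
            exact le_abs_self _
    have h2 : eLpNorm ((2:ℝ) • T n + fun x => min (max (v x) 0) (e n)) (ENNReal.ofReal p) μ ≤
        eLpNorm ((2:ℝ) • T n) (ENNReal.ofReal p) μ +
          eLpNorm (fun x => min (max (v x) 0) (e n)) (ENNReal.ofReal p) μ := by
      apply eLpNorm_add_le ha1 ha2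
      rw [← ENNReal.ofReal_one]
      exact ENNReal.ofReal_le_ofReal hp.le
    have h3 : eLpNorm ((2:ℝ) • T n) (ENNReal.ofReal p) μ ≤ 2 * ENNReal.ofReal (e n) := by
      rw [eLpNorm_const_smul]
      have h2n : ‖(2:ℝ)‖ₑ = 2 := by rw [Real.enorm_eq_ofReal_abs, abs_two]; norm_num
      rw [h2n]
      exact mul_le_mul_right (hT_eLp n) _
    have h4 : eLpNorm (fun x => min (max (v x) 0) (e n)) (ENNReal.ofReal p) μ =
        (∫⁻ x, ENNReal.ofReal ((min (max (v x) 0) (e n)) ^ p) ∂μ) ^ (1/p) := by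
      rw [eLpNorm_eq_lintegral_rpow_enorm_toReal hof hof2, htoReal]
      congr 1
      apply lintegral_congr
      intro x
      show (‖min (max (v x) 0) (e n)‖₊ : ℝ≥0∞) ^ p =
        ENNReal.ofReal ((min (max (v x) 0) (e n)) ^ p)
      rw [← enorm_eq_nnnorm, Real.enorm_eq_ofReal_abs, abs_of_nonneg (le_min (le_max_right _ _) (hepos n).le),
        ENNReal.ofReal_rpow_of_nonneg (le_min (le_max_right _ _) (hepos n).le) hp0.le]
    calc eLpNorm (z n - fun x => max (v x) 0) (ENNReal.ofReal p) μ
        ≤ _ := h1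
      _ ≤ _ := h2
      _ ≤ _ := add_le_add h3 h4.le
  have hrhs : Tendsto (fun n => 2 * ENNReal.ofReal (e n) +
      (∫⁻ x, ENNReal.ofReal ((min (max (v x) 0) (e n)) ^ p) ∂μ) ^ (1/p)) atTop (nhds 0) := by
    have h1 : Tendsto (fun n => 2 * ENNReal.ofReal (e n)) atTop (nhds 0) := by
      have hetend : Tendsto (fun n => ENNReal.ofReal (e n)) atTop (nhds 0) := by
        rw [show (0:ℝ≥0∞) = ENNReal.ofReal 0 by simp]
        apply ENNReal.tendsto_ofReal
        exact (tendsto_pow_atTop_nhds_zero_of_lt_one (by norm_num : (0:ℝ) ≤ 1/2)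
          (by norm_num : (1/2:ℝ) < 1)).comp (tendsto_add_atTop_nat 1)
      have h := ENNReal.Tendsto.const_mul hetend (Or.inr (by norm_num : (2:ℝ≥0∞) ≠ ⊤))
      simpa using h
    have h2 : Tendsto (fun n =>
        (∫⁻ x, ENNReal.ofReal ((min (max (v x) 0) (e n)) ^ p) ∂μ) ^ (1/p)) atTop (nhds 0) := by
      have h := ((ENNReal.continuous_rpow_const (y := 1/p)).tendsto 0).comp hdct
      rw [show ((0:ℝ≥0∞) ^ (1/p)) = 0 from ENNReal.zero_rpow_of_pos (by positivity)] at h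
      exact h
    simpa using h1.add h2
  have hconv : Tendsto (fun n => eLpNorm (z n - fun x => max (v x) 0) (ENNReal.ofReal p) μ)
      atTop (nhds 0) :=
    tendsto_of_tendsto_of_tendsto_of_le_of_le tendsto_const_nhds hrhs
      (fun n => zero_le) hbnd
  -- uniform energy bound
  have hM : ∀ n, D.Γ (z n) Set.univ ≤
      (D.Γ v Set.univ ^ (1/p) + ENNReal.ofReal 2) ^ p := by
    intro n
    refine (hzΓ n Set.univ).trans ?_
    refine (gamma_add_le D hp0 hvF (D.smul_mem (-2) (T n) (hTF n)) Set.univ).trans ?_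
    apply ENNReal.rpow_le_rpow _ hp0.le
    apply add_le_add le_rfl
    have hhom : D.Γ ((-2:ℝ) • T n) Set.univ =
        ENNReal.ofReal (|(-2:ℝ)| ^ p) * D.Γ (T n) Set.univ := by
      rw [D.homogeneity (T n) (hTF n) (-2), Measure.smul_apply, smul_eq_mul]
    rw [hhom]
    have h2b : ENNReal.ofReal (|(-2:ℝ)| ^ p) * D.Γ (T n) Set.univ ≤
        ENNReal.ofReal ((2:ℝ) ^ p) * 1 := by
      apply mul_le_mul'
      · apply ENNReal.ofReal_le_ofReal
        rw [abs_neg, abs_two]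
      · refine (hTΓ n).trans ?_
        rw [← ENNReal.ofReal_one]
        apply ENNReal.ofReal_le_ofReal
        calc (e n) ^ p ≤ 1 ^ p := Real.rpow_le_rpow (hepos n).le (he1 n) hp0.le
          _ = 1 := Real.one_rpow p
    calc (ENNReal.ofReal (|(-2:ℝ)| ^ p) * D.Γ (T n) Set.univ) ^ (1/p)
        ≤ (ENNReal.ofReal ((2:ℝ) ^ p) * 1) ^ (1/p) := ENNReal.rpow_le_rpow h2b (by positivity)
      _ = ENNReal.ofReal 2 := by
          rw [mul_one, ← ENNReal.ofReal_rpow_of_nonneg (by norm_num : (0:ℝ) ≤ 2) hp0.le,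
            rpow_recover' hp0]
  have hMne : (D.Γ v Set.univ ^ (1/p) + ENNReal.ofReal 2) ^ p ≠ ⊤ := by
    apply ENNReal.rpow_ne_top_of_nonneg hp0.le
    apply ENNReal.add_ne_top.mpr
    exact ⟨ENNReal.rpow_ne_top_of_nonneg (by positivity) (D.energy_finite v hvF),
      ENNReal.ofReal_ne_top⟩
  obtain ⟨-, hlsc⟩ := D.lsc (fun x => max (v x) 0) z hzF (hvm.max measurable_const) hconv
    ⟨_, hMne, hM⟩
  have hfin := hlsc {x | v x ≤ 0}
  rw [show (fun i => D.Γ (z i) {x | v x ≤ 0}) = fun _ => (0:ℝ≥0∞) from funext hzzero,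
    liminf_const] at hfin
  exact le_antisymm hfin zero_le

end D

end Stmt13Aux
/-- the log-Caccioppoli-type energy comparison (Lemma 3.1 of the paper). -/
theorem stmt13 {X : Type} [MetricSpace X] [MeasurableSpace X] [BorelSpace X]
    (μ : Measure X) (p : ℝ) (hp : 1 < p) (D : PDirichlet X μ p)
    (Ω : Set X) (hΩ : IsOpen Ω)
    (u : X → ℝ) (hu : u ∈ D.F) (huq : D.QuasiCont u)
    (husup : Superharmonic D Ω u) (hufin : D.Γ u Ω ≠ ∞)
    (hu01 : ∀ x, 0 ≤ u x ∧ u x ≤ 1)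
    (h : X → ℝ) (hh : h ∈ D.F) (hhq : D.QuasiCont h) (hh0 : ∀ x ∉ Ω, h x ≤ 0)
    (A : Set X) (hA : MeasurableSet A) (hAΩ : A ⊆ Ω) (hhA : ∀ x ∈ A, 1 ≤ h x) :
    D.Γ u A ≤ D.Γ h Ω := by
  classical
  have hp0 : 0 < p := one_pos.trans hp
  -- measurable surgery on u and h
  obtain ⟨u', Ou, Tu, hu'm, hu'F, hu'Γ, hu'ae, hu'val, hu'gp, hu'agree⟩ :=
    Stmt13Aux.surgery D hp0 hu huq
  obtain ⟨hcore, Oh, Th, hcm, hcF, hcΓ, hcae, hcval, hcgp, hcagree⟩ :=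
    Stmt13Aux.surgery D hp0 hh hhq
  -- adjusted measurable version of h
  set h' : X → ℝ := fun x => if x ∈ A then max (hcore x) 1 else hcore x with hh'def
  have hh'm : Measurable h' := Measurable.ite hA (hcm.max measurable_const) hcm
  have hh'agree : ∀ n, ∀ x ∈ (Oh n)ᶜ, h' x = h x := by
    intro n x hx
    have h1 : hcore x = h x := hcagree n x hx
    by_cases hxA : x ∈ A
    · simp only [hh'def, if_pos hxA, h1]
      exact max_eq_left (hhA x hxA)
    · simp only [hh'def, if_neg hxA, h1]
  have hh'ae : h' =ᵐ[μ] h := by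
    filter_upwards [hcae] with x hx
    by_cases hxA : x ∈ A
    · simp only [hh'def, if_pos hxA, hx]
      exact max_eq_left (hhA x hxA)
    · simp only [hh'def, if_neg hxA, hx]
  have hh'mem := D.congr_ae h hh h' hh'ae.symm hh'm
  have hh'F : h' ∈ D.F := hh'mem.1
  have hh'Γ : D.Γ h' = D.Γ h := hh'mem.2
  have hh'A : ∀ x ∈ A, 1 ≤ h' x := fun x hx => by
    simp only [hh'def, if_pos hx]
    exact le_max_right _ _
  have hh'0 : ∀ x ∉ Ω, h' x ≤ 0 := by
    intro x hx
    have hxA : x ∉ A := fun hxa => hx (hAΩ hxa)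
    simp only [hh'def, if_neg hxA]
    rcases hcval x with h1 | h1
    · rw [h1]; exact hh0 x hx
    · rw [h1]
  have hh'gp : ∀ ε : ℝ, 0 < ε → ∃ O T, Stmt13Aux.GoodPair D h' ε O T := by
    intro ε hε
    obtain ⟨n, hn⟩ := Stmt13Aux.exists_small ε hε
    refine ⟨Oh n, Th n, ?_⟩
    obtain ⟨h1, h2, h3, h4, h5, h6, h7⟩ := hcgp n
    exact Stmt13Aux.goodPair_mono D hn
      ⟨h1, h2.congr (fun x hx => (hh'agree n x hx)), h3, h4, h5, h6, h7⟩
  have hu'gp' : ∀ ε : ℝ, 0 < ε → ∃ O T, Stmt13Aux.GoodPair D u' ε O T := by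
    intro ε hε
    obtain ⟨n, hn⟩ := Stmt13Aux.exists_small ε hε
    refine ⟨Ou n, Tu n, ?_⟩
    obtain ⟨h1, h2, h3, h4, h5, h6, h7⟩ := hu'gp n
    exact Stmt13Aux.goodPair_mono D hn
      ⟨h1, h2.congr (fun x hx => (hu'agree n x hx)), h3, h4, h5, h6, h7⟩
  have hu'01 : ∀ x, 0 ≤ u' x ∧ u' x ≤ 1 := fun x => by
    rcases hu'val x with h1 | h1 <;> rw [h1]
    · exact hu01 x
    · norm_num
  -- the key inequality for each c < 1
  have key : ∀ c : ℝ, 0 < c → c < 1 →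
      ENNReal.ofReal (c ^ p) * D.Γ u A ≤ D.Γ h Ω := by
    intro c hc0 hc1
    -- clamp of h'
    set k : X → ℝ := fun x => max (min (h' x) 1) 0 with hkdef
    have hkcomp : (fun t : ℝ => max (min t 1) 0) ∘ h' = k := rfl
    have hkF : k ∈ D.F :=
      hkcomp ▸ (Stmt13Aux.gamma_lip D hh'F Stmt13Aux.lip_clamp (by norm_num)).1
    have hkΓ : ∀ B : Set X, D.Γ k B ≤ D.Γ h' B := fun B =>
      hkcomp ▸ (Stmt13Aux.gamma_lip D hh'F Stmt13Aux.lip_clamp (by norm_num)).2 B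
    have hkm : Measurable k := (hh'm.min measurable_const).max measurable_const
    have hk01 : ∀ x, 0 ≤ k x ∧ k x ≤ 1 := fun x =>
      ⟨le_max_right _ _, max_le (min_le_right _ _) zero_le_one⟩
    -- m = k - c u' and its negation
    set m : X → ℝ := fun x => k x - c * u' x with hmdef
    have hmF : m ∈ D.F := by
      have hmem : k + (-c) • u' ∈ D.F := D.add_mem _ hkF _ (D.smul_mem _ _ hu'F)
      have heq : k + (-c) • u' = m := by
        funext x
        simp only [Pi.add_apply, Pi.smul_apply, smul_eq_mul, hmdef]
        ring
      exact heq ▸ hmem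
    have hmm : Measurable m := hkm.sub (hu'm.const_mul c)
    have hm1 : ∀ x, m x ≤ 1 := fun x => by
      have h1 := (hk01 x).2
      have h2 : 0 ≤ c * u' x := mul_nonneg hc0.le (hu'01 x).1
      simp only [hmdef]
      linarith
    set mneg : X → ℝ := fun x => c * u' x - k x with hmnegdef
    have hmnegF : mneg ∈ D.F := by
      have hmem : c • u' + (-1:ℝ) • k ∈ D.F :=
        D.add_mem _ (D.smul_mem _ _ hu'F) _ (D.smul_mem _ _ hkF)
      have heq : c • u' + (-1:ℝ) • k = mneg := by
        funext x
        simp only [Pi.add_apply, Pi.smul_apply, smul_eq_mul, hmnegdef]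
        ring
      exact heq ▸ hmem
    have hmnegm : Measurable mneg := (hu'm.const_mul c).sub hkm
    have hmneg1 : ∀ x, mneg x ≤ 1 := fun x => by
      have h1 := (hk01 x).1
      have h2 : c * u' x ≤ c * 1 := mul_le_mul_of_nonneg_left (hu'01 x).2 hc0.le
      simp only [hmnegdef]
      linarith
    -- good pair families for m and mneg
    have hgpboth : ∀ ε : ℝ, 0 < ε → (∃ O T, Stmt13Aux.GoodPair D m ε O T) ∧
        (∃ O T, Stmt13Aux.GoodPair D mneg ε O T) := by
      intro ε hε
      have h2p : (0:ℝ) < 2 ^ p := Real.rpow_pos_of_pos two_pos p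
      have hδ : 0 < ε / (2 * 2 ^ p) := by positivity
      obtain ⟨O₁, T₁, hg₁⟩ := hu'gp' _ hδ
      obtain ⟨O₂, T₂, hg₂⟩ := hh'gp _ hδ
      have hcu : ContinuousOn u' (O₁ ∪ O₂)ᶜ :=
        hg₁.2.1.mono (compl_subset_compl.mpr Set.subset_union_left)
      have hch : ContinuousOn h' (O₁ ∪ O₂)ᶜ :=
        hg₂.2.1.mono (compl_subset_compl.mpr Set.subset_union_right)
      have hck : ContinuousOn k (O₁ ∪ O₂)ᶜ :=
        (hch.inf continuousOn_const).sup continuousOn_const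
      have hcm' : ContinuousOn m (O₁ ∪ O₂)ᶜ := hck.sub (continuousOn_const.mul hcu)
      have hcmneg : ContinuousOn mneg (O₁ ∪ O₂)ᶜ := (continuousOn_const.mul hcu).sub hck
      have hbud : (2:ℝ) ^ p * (ε / (2 * 2 ^ p) + ε / (2 * 2 ^ p)) ≤ ε := by
        apply le_of_eq
        have h2p' : (2:ℝ) * 2 ^ p ≠ 0 := by positivity
        field_simp
        ring
      constructor
      · exact ⟨O₁ ∪ O₂, T₁ + T₂, Stmt13Aux.goodPair_mono D hbud
          (Stmt13Aux.goodPair_union D hp0 hδ.le hδ.le hg₁ hg₂ hcm')⟩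
      · exact ⟨O₁ ∪ O₂, T₁ + T₂, Stmt13Aux.goodPair_mono D hbud
          (Stmt13Aux.goodPair_union D hp0 hδ.le hδ.le hg₁ hg₂ hcmneg)⟩
    -- ψ and w
    set ψ : X → ℝ := fun x => max (m x) 0 with hψdef
    have hψcomp : (fun t : ℝ => max t 0) ∘ m = ψ := rfl
    have hψF : ψ ∈ D.F :=
      hψcomp ▸ (Stmt13Aux.gamma_lip D hmF Stmt13Aux.lip_pos (by norm_num)).1
    have hψm : Measurable ψ := hmm.max measurable_const
    set w : X → ℝ := fun x => max (mneg x) 0 with hwdef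
    have hwcomp : (fun t : ℝ => max t 0) ∘ mneg = w := rfl
    have hwF : w ∈ D.F :=
      hwcomp ▸ (Stmt13Aux.gamma_lip D hmnegF Stmt13Aux.lip_pos (by norm_num)).1
    -- zero-set facts
    have hψ0 : D.Γ ψ {x | m x ≤ 0} = 0 :=
      Stmt13Aux.zeroset D hp hmF hmm hm1 (fun ε hε => (hgpboth ε hε).1)
    have hw0 : D.Γ w {x | mneg x ≤ 0} = 0 :=
      Stmt13Aux.zeroset D hp hmnegF hmnegm hmneg1 (fun ε hε => (hgpboth ε hε).2)
    -- superharmonicity test function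
    have hψnn : ∀ x, 0 ≤ ψ x := fun x => le_max_right _ _
    have hψoff : ∀ x ∉ Ω, ψ x = 0 := by
      intro x hx
      have hk0 : k x = 0 := by
        have h1 : h' x ≤ 0 := hh'0 x hx
        simp only [hkdef]
        rw [max_eq_right (le_trans (min_le_left _ _) h1)]
      have hu0 : 0 ≤ u' x := (hu'01 x).1
      have h2 : 0 ≤ c * u' x := mul_nonneg hc0.le hu0
      simp only [hψdef, hmdef, hk0]
      rw [max_eq_right (by linarith)]
    set ψc : X → ℝ := c⁻¹ • ψ with hψcdef
    have hψcF : ψc ∈ D.F := D.smul_mem _ _ hψF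
    have hψcnn : ∀ x, 0 ≤ ψc x := fun x => by
      simp only [hψcdef, Pi.smul_apply, smul_eq_mul]
      exact mul_nonneg (by positivity) (hψnn x)
    have hψcoff : ∀ x ∉ Ω, ψc x = 0 := fun x hx => by
      simp only [hψcdef, Pi.smul_apply, smul_eq_mul, hψoff x hx, mul_zero]
    have hsup := husup ψc hψcF hψcnn hψcoff
    have hts : tsupport ψc = tsupport ψ := by
      unfold tsupport
      rw [hψcdef]
      exact congrArg closure
        (Function.support_const_smul_of_ne_zero (c⁻¹) ψ (inv_ne_zero hc0.ne'))
    rw [hts] at hsup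
    -- replace u by its measurable version
    have hcongr : D.Γ (u + ψc) = D.Γ (u' + ψc) := by
      have hmemeq := D.congr_ae (u + ψc) (D.add_mem u hu _ hψcF) (u' + ψc)
        (Filter.EventuallyEq.add hu'ae.symm (Filter.EventuallyEq.refl _ ψc))
        (hu'm.add (hψm.const_smul c⁻¹))
      exact hmemeq.2.symm
    rw [hcongr] at hsup
    -- homogeneity: c • (u' + ψc) = c • u' + ψ
    have hcomb : c • (u' + ψc) = c • u' + ψ := by
      funext x
      simp only [Pi.smul_apply, Pi.add_apply, smul_eq_mul, hψcdef]
      rw [mul_add, mul_inv_cancel_left₀ hc0.ne']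
    have hhomog : D.Γ (c • u' + ψ) = ENNReal.ofReal (c ^ p) • D.Γ (u' + ψc) := by
      rw [← hcomb, D.homogeneity _ (D.add_mem _ hu'F _ hψcF) c, abs_of_pos hc0]
    set S : Set X := Ω ∩ tsupport ψ with hSdef
    have htmeas : MeasurableSet {x | m x ≤ 0} := measurableSet_le hmm measurable_const
    set E₁ : Set X := S ∩ {x | m x ≤ 0} with hE₁
    set E₂ : Set X := S \ {x | m x ≤ 0} with hE₂
    have hpart : D.Γ u' E₁ + D.Γ u' E₂ = D.Γ u' S := measure_inter_add_diff S htmeas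
    -- superharmonic bound
    have hstep1 : ENNReal.ofReal (c ^ p) * D.Γ u' S ≤ D.Γ (c • u' + ψ) S := by
      rw [hu'Γ]
      calc ENNReal.ofReal (c ^ p) * D.Γ u S
          ≤ ENNReal.ofReal (c ^ p) * D.Γ (u' + ψc) S := mul_le_mul_right hsup _
        _ = D.Γ (c • u' + ψ) S := by rw [hhomog, Measure.smul_apply, smul_eq_mul]
    have hsplit : D.Γ (c • u' + ψ) S ≤ D.Γ (c • u' + ψ) E₁ + D.Γ (c • u' + ψ) E₂ := by
      have hsub : S ⊆ E₁ ∪ E₂ := by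
        rw [hE₁, hE₂, Set.inter_union_diff]
      exact (measure_mono hsub).trans (measure_union_le _ _)
    -- E₁ bound
    have hψE₁ : D.Γ ψ E₁ = 0 := measure_mono_null (fun x hx => hx.2) hψ0
    have hstep3 : D.Γ (c • u' + ψ) E₁ ≤ ENNReal.ofReal (c ^ p) * D.Γ u' E₁ := by
      refine (Stmt13Aux.gamma_add_le_of_right_zero D hp0
        (D.smul_mem c u' hu'F) hψF hψE₁).trans ?_
      rw [D.homogeneity u' hu'F c, Measure.smul_apply, smul_eq_mul, abs_of_pos hc0]
    -- E₂ bound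
    have hkw : c • u' + ψ = k + w := by
      funext x
      simp only [Pi.add_apply, Pi.smul_apply, smul_eq_mul, hψdef, hwdef, hmdef, hmnegdef]
      rcases le_total (c * u' x) (k x) with hle | hle
      · rw [max_eq_left (by linarith), max_eq_right (by linarith)]
        ring
      · rw [max_eq_right (by linarith), max_eq_left (by linarith)]
        ring
    have hwE₂ : D.Γ w E₂ = 0 := by
      refine measure_mono_null (fun x hx => ?_) hw0
      have h1 : ¬ (m x ≤ 0) := hx.2
      push_neg at h1
      show mneg x ≤ 0
      simp only [hmnegdef]
      simp only [hmdef] at h1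
      linarith
    have hstep4 : D.Γ (c • u' + ψ) E₂ ≤ D.Γ h Ω := by
      rw [hkw]
      refine (Stmt13Aux.gamma_add_le_of_right_zero D hp0 hkF hwF hwE₂).trans ?_
      have hE₂Ω : E₂ ⊆ Ω := fun x hx => hx.1.1
      calc D.Γ k E₂ ≤ D.Γ k Ω := measure_mono hE₂Ω
        _ ≤ D.Γ h' Ω := hkΓ Ω
        _ = D.Γ h Ω := by rw [hh'Γ]
    -- cancel
    have hfinE₁ : ENNReal.ofReal (c ^ p) * D.Γ u' E₁ ≠ ⊤ := by
      apply ENNReal.mul_ne_top ENNReal.ofReal_ne_top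
      have hle : D.Γ u' E₁ ≤ D.Γ u Ω := by
        rw [hu'Γ]
        exact measure_mono (fun x hx => hx.1.1)
      exact ne_top_of_le_ne_top hufin hle
    have hchain : ENNReal.ofReal (c ^ p) * D.Γ u' E₁ + ENNReal.ofReal (c ^ p) * D.Γ u' E₂ ≤
        ENNReal.ofReal (c ^ p) * D.Γ u' E₁ + D.Γ h Ω := by
      calc ENNReal.ofReal (c ^ p) * D.Γ u' E₁ + ENNReal.ofReal (c ^ p) * D.Γ u' E₂
          = ENNReal.ofReal (c ^ p) * (D.Γ u' E₁ + D.Γ u' E₂) := (mul_add _ _ _).symm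
        _ = ENNReal.ofReal (c ^ p) * D.Γ u' S := by rw [hpart]
        _ ≤ D.Γ (c • u' + ψ) S := hstep1
        _ ≤ D.Γ (c • u' + ψ) E₁ + D.Γ (c • u' + ψ) E₂ := hsplit
        _ ≤ _ := add_le_add hstep3 hstep4
    have hcancel : ENNReal.ofReal (c ^ p) * D.Γ u' E₂ ≤ D.Γ h Ω :=
      (ENNReal.add_le_add_iff_left hfinE₁).mp hchain
    -- A sits inside E₂
    have hAE₂ : A ⊆ E₂ := by
      intro x hx
      have hk1 : k x = 1 := by
        simp only [hkdef]
        rw [min_eq_right (hh'A x hx), max_eq_left zero_le_one]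
      have hmpos : 0 < m x := by
        simp only [hmdef, hk1]
        have h2 : c * u' x ≤ c * 1 := mul_le_mul_of_nonneg_left (hu'01 x).2 hc0.le
        linarith
      refine ⟨⟨hAΩ hx, ?_⟩, fun hcon => absurd hcon (not_le.mpr hmpos)⟩
      apply subset_tsupport
      show ψ x ≠ 0
      simp only [hψdef]
      rw [max_eq_left hmpos.le]
      exact ne_of_gt hmpos
    calc ENNReal.ofReal (c ^ p) * D.Γ u A = ENNReal.ofReal (c ^ p) * D.Γ u' A := by rw [hu'Γ]
      _ ≤ ENNReal.ofReal (c ^ p) * D.Γ u' E₂ := mul_le_mul_right (measure_mono hAE₂) _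
      _ ≤ D.Γ h Ω := hcancel
  -- pass to the limit c → 1
  by_cases htop : D.Γ h Ω = ⊤
  · rw [htop]; exact le_top
  have hfinA : D.Γ u A ≠ ⊤ := ne_top_of_le_ne_top hufin (measure_mono hAΩ)
  have hreal : ∀ c : ℝ, 0 < c → c < 1 → c ^ p * (D.Γ u A).toReal ≤ (D.Γ h Ω).toReal := by
    intro c h1 h2
    have hk := key c h1 h2
    have hk' := ENNReal.toReal_mono htop hk
    rwa [ENNReal.toReal_mul, ENNReal.toReal_ofReal (by positivity)] at hk'
  have hcseq : Tendsto (fun n : ℕ => (1 - 1/(n+1) : ℝ)) atTop (nhds 1) := by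
    have h1 : Tendsto (fun n : ℕ => (1/((n:ℝ)+1))) atTop (nhds 0) :=
      tendsto_one_div_add_atTop_nhds_zero_nat
    have h2 := (tendsto_const_nhds (x := (1:ℝ)) (f := (atTop : Filter ℕ))).sub h1
    simpa using h2
  have hppow : Tendsto (fun n : ℕ => ((1 - 1/(n+1) : ℝ)) ^ p) atTop (nhds 1) := by
    have hcontr := (Real.continuousAt_rpow_const 1 p (Or.inl one_ne_zero)).tendsto
    have h2 := hcontr.comp hcseq
    simpa [Function.comp_def, Real.one_rpow] using h2
  have hlim : Tendsto (fun n : ℕ => ((1 - 1/(n+1) : ℝ)) ^ p * (D.Γ u A).toReal) atTop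
      (nhds ((D.Γ u A).toReal)) := by
    have h2 := hppow.mul_const ((D.Γ u A).toReal)
    simpa using h2
  have hle : (D.Γ u A).toReal ≤ (D.Γ h Ω).toReal := by
    apply le_of_tendsto hlim
    rw [Filter.eventually_atTop]
    refine ⟨1, fun n hn => ?_⟩
    have hn1 : (1:ℝ) ≤ (n:ℝ) := by exact_mod_cast hn
    have hlt : (1:ℝ)/(n+1) ≤ 1/2 := by
      apply one_div_le_one_div_of_le
      · norm_num
      · linarith
    have hgt : (0:ℝ) < 1/((n:ℝ)+1) := by positivity
    exact hreal _ (by linarith) (by linarith)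
  exact (ENNReal.toReal_le_toReal hfinA htop).mp hle
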